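/- Let C ⊆ ℝ² and T : C → C be as in the John construction (T = I₂∘I₁ with I₁ fixing x-coordinates and I₂ fixing y-coordinates). Suppose f, g : ℝ → ℝ are continuous, f(x) + g(y) = 0 on C, and there exists a point P ∈ C whose orbit {TⁿP : n ∈ ℤ} is dense in C. Then f is constant on the projection of C to the x-axis and g is constant on the projection of C to the y-axis. -/

import Mathlib

/-- If the John mapping `T = I₂ ∘ I₁` (built from coordinate-preserving
involutions) has a point `P ∈ C` with dense orbit `{TⁿP : n ∈ ℤ}`, and
continuous functions `f, g` satisfy `f(x) + g(y) = 0` on `C`, then `f` is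
constant on the projection of `C` to the `x`-axis and `g` on the projection
to the `y`-axis. -/
theorem john_dense_orbit_constancy (C : Set (ℝ × ℝ)) (I₁ I₂ : Equiv.Perm C)
    (h1 : ∀ P : C, ((I₁ P : ℝ × ℝ)).1 = (P : ℝ × ℝ).1)
    (h2 : ∀ P : C, ((I₂ P : ℝ × ℝ)).2 = (P : ℝ × ℝ).2)
    (f g : ℝ → ℝ) (hf : Continuous f) (hg : Continuous g)
    (hfg : ∀ p ∈ C, f p.1 + g p.2 = 0)
    (P : C) (hdense : Dense (Set.range fun n : ℤ => ((I₂ * I₁) ^ n) P)) :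
    (∀ p ∈ C, ∀ q ∈ C, f p.1 = f q.1) ∧ (∀ p ∈ C, ∀ q ∈ C, g p.2 = g q.2) := by
  set T : Equiv.Perm C := I₂ * I₁ with hTdef
  have hI1 : ∀ q : C, f ((I₁ q : ℝ × ℝ)).1 = f ((q : ℝ × ℝ)).1 := fun q => by rw [h1]
  have hI2 : ∀ q : C, f ((I₂ q : ℝ × ℝ)).1 = f ((q : ℝ × ℝ)).1 := by
    intro q
    have hA := hfg _ (I₂ q).2
    have hB := hfg _ q.2
    rw [h2] at hA
    linarith
  have hT : ∀ q : C, f ((T q : ℝ × ℝ)).1 = f ((q : ℝ × ℝ)).1 := by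
    intro q
    have : T q = I₂ (I₁ q) := rfl
    rw [this, hI2, hI1]
  have hTinv : ∀ q : C, f ((T⁻¹ q : ℝ × ℝ)).1 = f ((q : ℝ × ℝ)).1 := by
    intro q
    have := hT (T⁻¹ q)
    rw [show T (T⁻¹ q) = q from T.apply_symm_apply q] at this; exact this.symm
  have horb : ∀ n : ℤ, ∀ q : C, f (((T ^ n) q : ℝ × ℝ)).1 = f ((q : ℝ × ℝ)).1 := by
    intro n
    induction n using Int.induction_on with
    | zero => intro q; simp
    | succ k ih =>
        intro q
        have h' : T ^ ((k : ℤ) + 1) = T ^ (k : ℤ) * T := zpow_add_one T k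
        rw [h', Equiv.Perm.mul_apply, ih, hT]
    | pred k ih =>
        intro q
        have h' : T ^ (-(k : ℤ) - 1) = T ^ (-(k : ℤ)) * T⁻¹ := zpow_sub_one T _
        rw [h', Equiv.Perm.mul_apply, ih, hTinv]
  -- The continuous function q ↦ f q.1 on C equals a constant on a dense set.
  have hconst : ∀ q : C, f ((q : ℝ × ℝ)).1 = f ((P : ℝ × ℝ)).1 := by
    have hF : Continuous fun q : C => f ((q : ℝ × ℝ)).1 :=
      hf.comp (continuous_fst.comp continuous_subtype_val)
    have heq : (fun q : C => f ((q : ℝ × ℝ)).1) =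
        fun _ : C => f ((P : ℝ × ℝ)).1 := by
      apply Continuous.ext_on hdense hF continuous_const
      rintro x ⟨n, rfl⟩
      exact horb n P
    intro q
    exact congrFun heq q
  constructor
  · intro p hp q hq
    have := hconst ⟨p, hp⟩
    have := hconst ⟨q, hq⟩
    simp_all
  · intro p hp q hq
    have h1' := hfg p hp
    have h2' := hfg q hq
    have := hconst ⟨p, hp⟩
    have := hconst ⟨q, hq⟩
    simp_all
    linarith
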